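/- If R is a ring of positive characteristic c whose group of units is a cyclic p-group (or a quasi-cyclic p-group), then c = 2, 4, q, or 2q where q is a Fermat prime. -/

import Mathlib

/-- The quasi-cyclic (Prüfer) `p`-group, realized as the subgroup of `ℂˣ`
consisting of all `p`-power roots of unity. -/
def pruferGroup (p : ℕ) : Subgroup ℂˣ where
  carrier := {x | ∃ n : ℕ, x ^ p ^ n = 1}
  one_mem' := ⟨0, one_pow _⟩
  mul_mem' := by
    rintro a b ⟨m, hm⟩ ⟨n, hn⟩
    exact ⟨m + n, by
      rw [mul_pow, pow_add, pow_mul, hm, one_pow, one_mul, mul_comm (p ^ m), pow_mul, hn,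
        one_pow]⟩
  inv_mem' := by
    rintro a ⟨n, hn⟩
    exact ⟨n, by rw [inv_pow, hn, inv_one]⟩

/-- A finite group containing three distinct square roots of `1` is not cyclic. -/
lemma not_isCyclic_of_three_sq {G : Type*} [Group G] [Finite G] (a b d : G)
    (hab : a ≠ b) (had : a ≠ d) (hbd : b ≠ d)
    (ha : a ^ 2 = 1) (hb : b ^ 2 = 1) (hd : d ^ 2 = 1) : ¬ IsCyclic G := by
  intro hcyc
  classical
  cases nonempty_fintype G
  have hle := IsCyclic.card_pow_eq_one_le (α := G) (n := 2) (by norm_num)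
  have hsub : ({a, b, d} : Finset G) ⊆ Finset.univ.filter (fun x => x ^ 2 = 1) := by
    intro x hx
    simp only [Finset.mem_insert, Finset.mem_singleton] at hx
    rcases hx with rfl | rfl | rfl <;> simp [ha, hb, hd]
  have h3 : ({a, b, d} : Finset G).card = 3 := by
    rw [Finset.card_insert_of_notMem (by simp [hab, had]),
      Finset.card_insert_of_notMem (by simp [hbd]), Finset.card_singleton]
  have := Finset.card_le_card hsub
  omega

/-- A product of two finite groups of even order is not cyclic. -/
lemma not_isCyclic_prod {G H : Type*} [Group G] [Group H] [Finite G] [Finite H]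
    (hG : 2 ∣ Nat.card G) (hH : 2 ∣ Nat.card H) : ¬ IsCyclic (G × H) := by
  haveI : Fact (Nat.Prime 2) := ⟨Nat.prime_two⟩
  obtain ⟨a, ha⟩ := exists_prime_orderOf_dvd_card' (G := G) 2 hG
  obtain ⟨b, hb⟩ := exists_prime_orderOf_dvd_card' (G := H) 2 hH
  have ha1 : a ≠ 1 := by intro h; rw [h, orderOf_one] at ha; omega
  have hb1 : b ≠ 1 := by intro h; rw [h, orderOf_one] at hb; omega
  have ha2 : a ^ 2 = 1 := by rw [← ha]; exact pow_orderOf_eq_one a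
  have hb2 : b ^ 2 = 1 := by rw [← hb]; exact pow_orderOf_eq_one b
  refine not_isCyclic_of_three_sq (a, (1 : H)) ((1 : G), b) (a, b)
    (fun h => ha1 (congrArg Prod.fst h)) (fun h => hb1 (congrArg Prod.snd h).symm)
    (fun h => ha1 (congrArg Prod.fst h).symm) ?_ ?_ ?_ <;>
  · rw [Prod.pow_mk]
    simp [ha2, hb2]

/-- For `a ≥ 3`, the unit group of `ZMod (2^a)` is not cyclic. -/
lemma not_isCyclic_units_two_pow {a : ℕ} (ha : 3 ≤ a) : ¬ IsCyclic (ZMod (2 ^ a))ˣ := by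
  obtain ⟨c, rfl⟩ : ∃ c, a = c + 3 := ⟨a - 3, by omega⟩
  haveI : NeZero ((2 : ℕ) ^ (c + 3)) := ⟨by positivity⟩
  have hne : ∀ k : ℕ, 0 < k → k < 2 ^ (c + 3) → ((k : ZMod (2 ^ (c + 3))) ≠ 0) := by
    intro k h1 h2 hk
    rw [ZMod.natCast_eq_zero_iff] at hk
    exact absurd (Nat.le_of_dvd h1 hk) (by omega)
  set x : ZMod (2 ^ (c + 3)) := ((2 ^ (c + 2) + 1 : ℕ) : ZMod (2 ^ (c + 3))) with hxdef
  have hsum : (2:ℕ) ^ (c + 3) = 2 ^ (c+2) + 2 ^ (c+2) := by ring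
  have h4 : (4:ℕ) ≤ 2 ^ (c+2) := by
    calc (4:ℕ) = 2 ^ 2 := by norm_num
    _ ≤ 2 ^ (c + 2) := Nat.pow_le_pow_right (by norm_num) (by omega)
  have hgrow : (2:ℕ) ^ (c+2) + 2 < 2 ^ (c+3) := by omega
  have hx2 : x * x = 1 := by
    have hnat : (2 ^ (c + 2) + 1) * (2 ^ (c + 2) + 1) = 2 ^ (c + 3) * (2 ^ (c + 1) + 1) + 1 := by
      ring
    calc x * x = ((2 ^ (c + 3) * (2 ^ (c + 1) + 1) + 1 : ℕ) : ZMod (2 ^ (c + 3))) := by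
          rw [hxdef, ← Nat.cast_mul, hnat]
      _ = 1 := by rw [Nat.cast_add, Nat.cast_mul, ZMod.natCast_self, zero_mul, zero_add,
          Nat.cast_one]
  set u : (ZMod (2 ^ (c + 3)))ˣ := ⟨x, x, hx2, hx2⟩ with hudef
  have husq : u ^ 2 = 1 := by
    ext
    rw [Units.val_pow_eq_pow_val, pow_two]
    exact hx2
  have hu1 : u ≠ 1 := by
    intro h
    have hx1 : x = 1 := congrArg Units.val h
    have : ((2 ^ (c + 2) : ℕ) : ZMod (2 ^ (c + 3))) = 0 := by
      have h' := sub_eq_zero_of_eq hx1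
      rw [hxdef] at h'
      push_cast at h' ⊢
      linear_combination h'
    exact hne (2 ^ (c + 2)) (by positivity) (by omega) this
  have hun1 : u ≠ -1 := by
    intro h
    have hx1 : x = -1 := congrArg Units.val h
    have : ((2 ^ (c + 2) + 2 : ℕ) : ZMod (2 ^ (c + 3))) = 0 := by
      rw [hxdef] at hx1
      push_cast at hx1 ⊢
      linear_combination hx1
    exact hne (2 ^ (c + 2) + 2) (by positivity) hgrow this
  have hunu : u ≠ -u := by
    intro h
    have hx1 : x = -x := congrArg Units.val h
    have : ((2 : ℕ) : ZMod (2 ^ (c + 3))) = 0 := by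
      have h2 : x + x = 0 := by linear_combination hx1
      have hxx : x + x = ((2 ^ (c + 3) + 2 : ℕ) : ZMod (2 ^ (c + 3))) := by
        rw [hxdef]
        push_cast
        ring
      rw [hxx, Nat.cast_add, ZMod.natCast_self, zero_add] at h2
      exact h2
    exact hne 2 (by norm_num) (by omega) this
  have hm1sq : ((-1 : (ZMod (2 ^ (c + 3)))ˣ)) ^ 2 = 1 := by
    rw [neg_one_sq]
  have hmusq : (-u) ^ 2 = 1 := by rw [neg_sq, husq]
  exact not_isCyclic_of_three_sq u (-1) (-u) hun1 hunu
    (fun h => hu1 (by rw [← neg_neg u, ← h, neg_neg])) husq hm1sq hmusq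

theorem fuchs_stmt9 (R : Type*) [Ring R] (c : ℕ) (hchar : ringChar R = c) (hc : 0 < c)
    (h : (∃ p n : ℕ, p.Prime ∧ 1 ≤ n ∧ IsCyclic Rˣ ∧ Nat.card Rˣ = p ^ n) ∨
         (∃ p : ℕ, p.Prime ∧ Nonempty (Rˣ ≃* pruferGroup p))) :
    c = 2 ∨ c = 4 ∨
      ∃ q : ℕ, q.Prime ∧ (∃ k : ℕ, 1 ≤ k ∧ q = 2 ^ k + 1) ∧ (c = q ∨ c = 2 * q) := by
  haveI hcharP : CharP R c := hchar ▸ ringChar.charP R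
  -- dispose of c = 1
  rcases eq_or_ne c 1 with rfl | hc1
  · exfalso
    have h10 : (1 : R) = 0 := by
      rw [← Nat.cast_one (R := R)]
      exact CharP.cast_eq_zero R 1
    haveI hsub : Subsingleton Rˣ := ⟨fun u v => Units.ext (by
      calc (u : R) = u * 1 := (mul_one _).symm
        _ = (0 : R) := by rw [h10, mul_zero]
        _ = v * 1 := by rw [h10, mul_zero]
        _ = v := mul_one _)⟩
    rcases h with ⟨p, n, hp, hn, _, hcard⟩ | ⟨p, hp, ⟨e⟩⟩
    · have h1 : Nat.card Rˣ = 1 := Nat.card_eq_one_iff_unique.mpr ⟨inferInstance, ⟨1⟩⟩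
      have h2 : 1 < p ^ n := Nat.one_lt_pow (by omega) hp.one_lt
      omega
    · -- the Prüfer group is nontrivial
      have hζ := Complex.isPrimitiveRoot_exp p hp.ne_zero
      have hpow : Complex.exp (2 * Real.pi * Complex.I / p) ^ p = 1 := hζ.pow_eq_one
      have hne1 : Complex.exp (2 * Real.pi * Complex.I / p) ≠ 1 := hζ.ne_one hp.one_lt
      have hunit := IsUnit.of_pow_eq_one hpow hp.ne_zero
      have humem : hunit.unit ∈ pruferGroup p := by
        refine ⟨1, ?_⟩
        ext
        rw [pow_one, Units.val_pow_eq_pow_val, IsUnit.unit_spec, hpow, Units.val_one]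
      have hxne : (⟨hunit.unit, humem⟩ : pruferGroup p) ≠ 1 := by
        intro hx
        apply hne1
        have h' : hunit.unit = 1 := congrArg Subtype.val hx
        rw [← IsUnit.unit_spec hunit, h', Units.val_one]
      have := Subsingleton.elim (e.symm ⟨hunit.unit, humem⟩) (e.symm 1)
      exact hxne (e.symm.injective this)
  rcases eq_or_ne c 2 with rfl | hc2
  · exact Or.inl rfl
  have hc3 : 2 < c := by omega
  haveI : NeZero c := ⟨by omega⟩
  -- the embedding of (ZMod c)ˣ into Rˣ
  set φ : (ZMod c)ˣ →* Rˣ := Units.map (ZMod.castHom (dvd_refl c) R).toMonoidHom with hφ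
  have hinj : Function.Injective φ := Units.map_injective (ZMod.castHom_injective R)
  -- (ZMod c)ˣ is cyclic of prime-power order
  obtain ⟨hcyc, p, hp, m, hcard⟩ :
      IsCyclic (ZMod c)ˣ ∧ ∃ p, p.Prime ∧ ∃ m, Nat.card (ZMod c)ˣ = p ^ m := by
    rcases h with ⟨p, n, hp, hn, hRcyc, hRcard⟩ | ⟨p, hp, ⟨e⟩⟩
    · haveI := hRcyc
      constructor
      · exact isCyclic_of_surjective (MonoidHom.ofInjective hinj).symm
          (MonoidHom.ofInjective hinj).symm.surjective
      · refine ⟨p, hp, ?_⟩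
        have hdvd : Nat.card (ZMod c)ˣ ∣ p ^ n := by
          rw [Nat.card_congr (MonoidHom.ofInjective hinj).toEquiv, ← hRcard]
          exact Subgroup.card_subgroup_dvd_card φ.range
        obtain ⟨m, _, hm⟩ := (Nat.dvd_prime_pow hp).mp hdvd
        exact ⟨m, hm⟩
    · set F : (ZMod c)ˣ →* ℂˣ := (pruferGroup p).subtype.comp (e.toMonoidHom.comp φ) with hF
      have hFinj : Function.Injective F :=
        (pruferGroup p).subtype_injective.comp (e.injective.comp hinj)
      have hcyc : IsCyclic (ZMod c)ˣ :=
        isCyclic_of_subgroup_isDomain ((Units.coeHom ℂ).comp F) (Units.val_injective.comp hFinj)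
      refine ⟨hcyc, p, hp, ?_⟩
      have hpg : IsPGroup p (ZMod c)ˣ := by
        intro g
        obtain ⟨n, hn⟩ : ∃ n : ℕ, ((e (φ g) : ℂˣ)) ^ p ^ n = 1 := (e (φ g)).2
        refine ⟨n, hFinj ?_⟩
        rw [map_pow, map_one]
        exact hn
      haveI : Fact p.Prime := ⟨hp⟩
      exact IsPGroup.iff_card.mp hpg
  -- so the totient of c is a power of 2
  have htot : c.totient = p ^ m := by
    rw [← ZMod.card_units_eq_totient c, ← Nat.card_eq_fintype_card]
    exact hcard
  have heven : 2 ∣ c.totient := even_iff_two_dvd.mp (Nat.totient_even hc3)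
  have hp2 : p = 2 := by
    have h2 : 2 ∣ p ^ m := htot ▸ heven
    exact ((Nat.prime_dvd_prime_iff_eq Nat.prime_two hp).mp
      (Nat.prime_two.dvd_of_dvd_pow h2)).symm
  subst hp2
  -- decompose c into a power of two times an odd number
  obtain ⟨a, t, ht_odd, hct⟩ := Nat.exists_eq_two_pow_mul_odd (n := c) (by omega)
  have ht0 : t ≠ 0 := by rintro rfl; omega
  rcases eq_or_ne t 1 with rfl | ht1
  · -- c is a power of two
    rw [mul_one] at hct
    have ha2 : 2 ≤ a := by
      by_contra hlt
      interval_cases a <;> omega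
    rcases eq_or_lt_of_le ha2 with rfl | ha3
    · right; left; rw [hct]; norm_num
    · exact absurd (hct ▸ hcyc) (not_isCyclic_units_two_pow ha3)
  · -- c has an odd prime factor q
    have ht3 : 3 ≤ t := by
      rcases ht_odd with ⟨j, hj⟩
      omega
    set q := t.minFac with hqdef
    have hq : q.Prime := Nat.minFac_prime ht1
    have hq2 : q ≠ 2 := by
      intro h2
      have hdvd2 : (2 : ℕ) ∣ t := h2 ▸ t.minFac_dvd
      rcases ht_odd with ⟨j, hj⟩
      omega
    have hq3 : 3 ≤ q := by
      have := hq.two_le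
      omega
    have hqc : q ∣ c := hct ▸ (t.minFac_dvd.mul_left _)
    set k := c.factorization q with hk
    have hk1 : 1 ≤ k := hq.factorization_pos_of_dvd (by omega) hqc
    set s := c / q ^ k with hs
    have hsplit : q ^ k * s = c := Nat.ordProj_mul_ordCompl_eq_self c q
    have hcop : Nat.Coprime q s := Nat.coprime_ordCompl hq (by omega)
    have hs0 : s ≠ 0 := by
      intro h0
      rw [h0, mul_zero] at hsplit
      omega
    have htotmul : (q ^ k).totient * s.totient = 2 ^ m := by
      rw [← Nat.totient_mul (hcop.pow_left k), hsplit, htot]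
    -- k = 1
    have hkeq : k = 1 := by
      by_contra hne1
      have hk2 : 2 ≤ k := by omega
      have hqdvd : q ∣ 2 ^ m := by
        refine dvd_trans ?_ ⟨s.totient, htotmul.symm⟩
        rw [Nat.totient_prime_pow hq (by omega)]
        exact Dvd.dvd.mul_right (dvd_pow_self q (by omega)) _
      exact hq2 ((Nat.prime_dvd_prime_iff_eq hq Nat.prime_two).mp
        (hq.dvd_of_dvd_pow hqdvd))
    rw [hkeq, pow_one] at hsplit
    rw [hkeq, pow_one, Nat.totient_prime hq] at htotmul
    -- q - 1 is a power of two
    obtain ⟨j, _, hqj⟩ := (Nat.dvd_prime_pow Nat.prime_two).mp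
      (⟨s.totient, htotmul.symm⟩ : q - 1 ∣ 2 ^ m)
    have hj1 : 1 ≤ j := by
      rcases Nat.eq_zero_or_pos j with rfl | hj
      · simp at hqj; omega
      · exact hj
    have hqform : q = 2 ^ j + 1 := by omega
    -- s ≤ 2
    have hs2 : s ≤ 2 := by
      by_contra hs3
      have hs3' : 2 < s := by omega
      haveI : NeZero q := ⟨by omega⟩
      haveI : NeZero s := ⟨hs0⟩
      have hEq : 2 ∣ Nat.card (ZMod q)ˣ := by
        rw [Nat.card_eq_fintype_card, ZMod.card_units_eq_totient]
        exact even_iff_two_dvd.mp (Nat.totient_even (by omega))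
      have hEs : 2 ∣ Nat.card (ZMod s)ˣ := by
        rw [Nat.card_eq_fintype_card, ZMod.card_units_eq_totient]
        exact even_iff_two_dvd.mp (Nat.totient_even hs3')
      have e : (ZMod (q * s))ˣ ≃* (ZMod q)ˣ × (ZMod s)ˣ :=
        (Units.mapEquiv (ZMod.chineseRemainder hcop).toMulEquiv).trans MulEquiv.prodUnits
      have hcyc'' : IsCyclic (ZMod (q * s))ˣ := by rw [hsplit]; exact hcyc
      exact not_isCyclic_prod hEq hEs (isCyclic_of_surjective e e.surjective)
    -- conclude
    clear_value s
    clear hs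
    have hs12 : s = 1 ∨ s = 2 := by omega
    rcases hs12 with hs_eq | hs_eq <;> rw [hs_eq] at hsplit
    · rw [mul_one] at hsplit
      exact Or.inr (Or.inr ⟨q, hq, ⟨j, hj1, hqform⟩, Or.inl hsplit.symm⟩)
    · exact Or.inr (Or.inr ⟨q, hq, ⟨j, hj1, hqform⟩, Or.inr (by omega)⟩)
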